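/- Let R be an integral domain. An R-module M is a Lucas module if and only if M is a torsion-free injective R-module. -/

import Mathlib

open CategoryTheory

universe u

/-- An ideal is dense if its annihilator in `R` is zero. -/
def Ideal.IsDense {R : Type u} [CommRing R] (I : Ideal R) : Prop :=
  ∀ r : R, (∀ a ∈ I, a * r = 0) → r = 0

/-- An ideal is semi-regular if it contains a finitely generated dense subideal. -/
def Ideal.IsSemiRegular {R : Type u} [CommRing R] (I : Ideal R) : Prop :=
  ∃ J : Ideal R, J ≤ I ∧ J.FG ∧ J.IsDense

/-- Membership in `𝒬`: finitely generated semi-regular ideals. -/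
def Ideal.IsInQ {R : Type u} [CommRing R] (I : Ideal R) : Prop :=
  I.FG ∧ I.IsSemiRegular

/-- An `R`-module is `𝒬`-torsion if every element is annihilated by some `I ∈ 𝒬`. -/
def IsQTorsion (R : Type u) [CommRing R] (M : Type u) [AddCommGroup M] [Module R M] : Prop :=
  ∀ x : M, ∃ I : Ideal R, I.IsInQ ∧ ∀ a ∈ I, a • x = 0

/-- An `R`-module is `𝒬`-torsion-free if no nonzero element is annihilated by any `I ∈ 𝒬`. -/
def IsQTorsionFree (R : Type u) [CommRing R] (M : Type u) [AddCommGroup M] [Module R M] : Prop :=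
  ∀ x : M, (∃ I : Ideal R, I.IsInQ ∧ ∀ a ∈ I, a • x = 0) → x = 0

/-- `Ext¹_R(A, B) = 0`. -/
def Ext1Vanishes (R : Type u) [CommRing R] (A B : Type u) [AddCommGroup A] [Module R A]
    [AddCommGroup B] [Module R B] : Prop :=
  Subsingleton (((Ext R (ModuleCat.{u} R) 1).obj (Opposite.op (ModuleCat.of R A))).obj
    (ModuleCat.of R B))

/-- A Lucas module is a `𝒬`-torsion-free module `M` with `Ext¹_R(R/I, M) = 0` for all `I ∈ 𝒬`. -/
def IsLucasModule (R : Type u) [CommRing R] (M : Type u) [AddCommGroup M] [Module R M] : Prop :=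
  IsQTorsionFree R M ∧ ∀ I : Ideal R, I.IsInQ → Ext1Vanishes R (R ⧸ I) M

/-! ### Auxiliary material -/

noncomputable section LucasAux

set_option linter.unusedSectionVars false

namespace LucasAux

variable {R : Type u} [CommRing R]

/-- The concrete meaning of exactness at `1` of the `Hom(-, M)` complex. -/
lemma linearYonedaObj_exactAt_one_iff (C : ChainComplex (ModuleCat.{u} R) ℕ)
    (M : ModuleCat.{u} R) :
    (C.linearYonedaObj R M).ExactAt 1 ↔
      ∀ g : C.X 1 ⟶ M, C.d 2 1 ≫ g = 0 → ∃ f : C.X 0 ⟶ M, C.d 1 0 ≫ f = g := by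
  rw [HomologicalComplex.exactAt_iff' _ 0 1 2 (by simp) (by simp),
    ShortComplex.moduleCat_exact_iff]
  constructor
  · intro h g hg
    obtain ⟨f, hf⟩ := h g hg
    exact ⟨f, hf⟩
  · intro h g hg
    obtain ⟨f, hf⟩ := h g hg
    exact ⟨f, hf⟩

/-- `Ext¹(X, M)` is subsingleton iff the `Hom(-, M)` complex of a projective resolution of `X`
is exact at `1`. -/
lemma ext1_subsingleton_iff_exact (X M : ModuleCat.{u} R) (P : ProjectiveResolution X) :
    Subsingleton (((Ext R (ModuleCat.{u} R) 1).obj (Opposite.op X)).obj M) ↔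
      (P.complex.linearYonedaObj R M).ExactAt 1 := by
  have e : ((Ext R (ModuleCat.{u} R) 1).obj (Opposite.op X)).obj M ≅
      (P.complex.linearYonedaObj R M).homology 1 := P.isoExt 1 M
  have eq : (((Ext R (ModuleCat.{u} R) 1).obj (Opposite.op X)).obj M : Type u) ≃
      ((P.complex.linearYonedaObj R M).homology 1 : Type u) :=
    ((forget (ModuleCat R)).mapIso e).toEquiv
  rw [HomologicalComplex.exactAt_iff_isZero_homology]
  constructor
  · intro h
    have : Subsingleton ((P.complex.linearYonedaObj R M).homology 1 : Type u) :=
      eq.symm.subsingleton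
    exact ModuleCat.isZero_of_subsingleton _
  · intro h
    have h0 : (𝟙 ((P.complex.linearYonedaObj R M).homology 1)) = 0 := h.eq_of_src _ _
    have : Subsingleton ((P.complex.linearYonedaObj R M).homology 1 : Type u) := by
      constructor
      intro a b
      calc a = (𝟙 ((P.complex.linearYonedaObj R M).homology 1)) a := rfl
      _ = (0 : (P.complex.linearYonedaObj R M).homology 1 ⟶ _) a := by rw [h0]
      _ = (0 : (P.complex.linearYonedaObj R M).homology 1 ⟶ _) b := by rfl
      _ = (𝟙 ((P.complex.linearYonedaObj R M).homology 1)) b := by rw [h0]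
      _ = b := rfl
    exact eq.subsingleton

/-- If `M` is an injective module, the `Hom(-, M)` complex of any projective resolution is
exact at `1`. -/
lemma exactAt_one_of_injective (M : ModuleCat.{u} R) [Module.Injective R M]
    (X : ModuleCat.{u} R) (P : ProjectiveResolution X) :
    ∀ g : P.complex.X 1 ⟶ M, P.complex.d 2 1 ≫ g = 0 →
      ∃ f : P.complex.X 0 ⟶ M, P.complex.d 1 0 ≫ f = g := by
  intro g hg
  have hex : ∀ x : P.complex.X 1, P.complex.d 1 0 x = 0 →
      ∃ y : P.complex.X 2, P.complex.d 2 1 y = x := by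
    have := P.complex_exactAt_succ 0
    rw [HomologicalComplex.exactAt_iff' _ 2 1 0 (by simp) (by simp),
      ShortComplex.moduleCat_exact_iff] at this
    exact this
  have hker : LinearMap.ker (P.complex.d 1 0).hom ≤
      LinearMap.ker g.hom := by
    intro x hx
    obtain ⟨y, hy⟩ := hex x hx
    have h1 : g (P.complex.d 2 1 y) = 0 := by
      have h2 := LinearMap.congr_fun (congrArg ModuleCat.Hom.hom hg) y
      simpa using h2
    simpa [LinearMap.mem_ker, hy] using h1
  set d1 : P.complex.X 1 →ₗ[R] P.complex.X 0 := (P.complex.d 1 0).hom with hd1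
  set q : (P.complex.X 1 ⧸ LinearMap.ker d1) →ₗ[R] M :=
    Submodule.liftQ _ g.hom hker with hq
  set e := d1.quotKerEquivRange with he
  obtain ⟨f, hf⟩ := Module.Injective.out (LinearMap.range d1).subtype
    (Submodule.injective_subtype _) (q.comp (e.symm : _ →ₗ[R] _))
  refine ⟨ModuleCat.ofHom f, ?_⟩
  ext x
  have hmem : d1 x ∈ LinearMap.range d1 := ⟨x, rfl⟩
  calc (P.complex.d 1 0 ≫ ModuleCat.ofHom f).hom x = f ((LinearMap.range d1).subtype ⟨d1 x, hmem⟩) := rfl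
    _ = q (e.symm ⟨d1 x, hmem⟩) := hf ⟨d1 x, hmem⟩
    _ = q (Submodule.Quotient.mk x) := by
        rw [he, d1.quotKerEquivRange_symm_apply_image x hmem]
        rfl
    _ = g.hom x := Submodule.liftQ_apply _ _ _

variable [IsDomain R]

/-- The 2-term free complex `0 → R --·a--> R`. -/
def mulComplex (a : R) : ChainComplex (ModuleCat.{u} R) ℕ :=
  ChainComplex.of
    (fun n => match n with
      | 0 => ModuleCat.of R R
      | 1 => ModuleCat.of R R
      | _ + 2 => ModuleCat.of R PUnit)
    (fun n => match n with
      | 0 => ModuleCat.ofHom (LinearMap.mulLeft R a)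
      | _ + 1 => 0)
    (fun n => match n with
      | 0 => by
          apply ModuleCat.hom_ext
          apply LinearMap.ext
          intro (x : PUnit)
          simp
      | _ + 1 => by
          apply ModuleCat.hom_ext
          apply LinearMap.ext
          intro (x : PUnit)
          simp)

@[simp] lemma mulComplex_d10 (a : R) :
    (mulComplex a).d 1 0 = ModuleCat.ofHom (LinearMap.mulLeft R a) :=
  by simp [mulComplex, ChainComplex.of.d]

@[simp] lemma mulComplex_d21 (a : R) : (mulComplex a).d 2 1 = 0 :=
  by simp [mulComplex, ChainComplex.of.d]; rfl

instance (a : R) (n : ℕ) : Projective ((mulComplex a).X n) := by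
  obtain (_ | _ | n) := n
  · exact (IsProjective.iff_projective _).mp inferInstance
  · exact (IsProjective.iff_projective _).mp inferInstance
  · exact (IsProjective.iff_projective _).mp inferInstance

/-- The 2-term complex `0 → R --·a--> R` is a projective resolution of `R ⧸ (a)`
when `a ≠ 0` in a domain. -/
def mulResolution (a : R) (ha : a ≠ 0) :
    ProjectiveResolution (ModuleCat.of R (R ⧸ Ideal.span ({a} : Set R))) where
  complex := mulComplex a
  π := (ChainComplex.toSingle₀Equiv _ _).symm
    ⟨ModuleCat.ofHom (Submodule.mkQ (Ideal.span ({a} : Set R))), by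
      rw [mulComplex_d10]
      apply ModuleCat.hom_ext
      apply LinearMap.ext
      intro (x : R)
      show Submodule.mkQ (Ideal.span ({a} : Set R)) (a * x) = (0 : R →ₗ[R] _) x
      rw [LinearMap.zero_apply]
      rw [Submodule.mkQ_apply, Submodule.Quotient.mk_eq_zero]
      exact Ideal.mem_span_singleton.mpr ⟨x, rfl⟩⟩
  quasiIso := ⟨fun n => by
    cases n with
    | zero =>
      rw [ChainComplex.quasiIsoAt₀_iff, ShortComplex.quasiIso_iff_of_zeros']
      · constructor
        · rw [ShortComplex.moduleCat_exact_iff]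
          intro x hx
          dsimp [HomologicalComplex.shortComplexFunctor'] at x hx ⊢
          erw [ChainComplex.toSingle₀Equiv_symm_apply_f_zero] at hx
          have hx' := (Submodule.Quotient.mk_eq_zero (Ideal.span ({a} : Set R))
            (x := show R from x)).mp hx
          obtain ⟨y, hy⟩ := Ideal.mem_span_singleton.mp hx'
          refine ⟨y, ?_⟩
          simp only [mulComplex_d10]
          exact hy.symm
        · dsimp [HomologicalComplex.shortComplexFunctor']
          erw [ChainComplex.toSingle₀Equiv_symm_apply_f_zero]
          refine (ModuleCat.epi_iff_surjective _).mpr ?_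
          exact Submodule.mkQ_surjective _
      all_goals rfl
    | succ n =>
      rw [quasiIsoAt_iff_exactAt']
      · rw [HomologicalComplex.exactAt_iff' _ (n+2) (n+1) n (by simp) (by simp),
          ShortComplex.moduleCat_exact_iff]
        intro x hx
        dsimp [HomologicalComplex.sc', HomologicalComplex.shortComplexFunctor'] at x hx ⊢
        cases n with
        | zero =>
          refine ⟨0, ?_⟩
          rw [mulComplex_d10] at hx
          have hx0 : a * (show R from x) = 0 := hx
          have hx1 : (show R from x) = 0 := by
            rcases mul_eq_zero.mp hx0 with h | h
            · exact absurd h ha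
            · exact h
          rw [mulComplex_d21]
          exact hx1.symm
        | succ n =>
          refine ⟨0, ?_⟩
          have hsub : Subsingleton ((mulComplex a).X (n + 1 + 1)) := by
            dsimp [mulComplex, ChainComplex.of]
            infer_instance
          exact Subsingleton.elim _ _
      · apply ChainComplex.exactAt_succ_single_obj⟩


/-- The ideal generated by a nonzero element of a domain is in `𝒬`. -/
lemma span_singleton_isInQ {a : R} (ha : a ≠ 0) : (Ideal.span ({a} : Set R)).IsInQ := by
  have hfg : (Ideal.span ({a} : Set R)).FG := ⟨{a}, by simp⟩
  have hdense : (Ideal.span ({a} : Set R)).IsDense := by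
    intro r hr
    have h := hr a (Ideal.subset_span rfl)
    rcases mul_eq_zero.mp h with h' | h'
    · exact absurd h' ha
    · exact h'
  exact ⟨hfg, Ideal.span ({a} : Set R), le_rfl, hfg, hdense⟩

lemma mulResolution_complex (a : R) (ha : a ≠ 0) :
    (mulResolution a ha).complex = mulComplex a := rfl

/-- If `Ext¹(R⧸(a), M) = 0` for `a ≠ 0`, then `M` is divisible by `a`. -/
lemma divisible_of_ext1 {M : Type u} [AddCommGroup M] [Module R M] {a : R} (ha : a ≠ 0)
    (h : Ext1Vanishes R (R ⧸ Ideal.span ({a} : Set R)) M) : ∀ m : M, ∃ n : M, a • n = m := by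
  intro m
  have hE := (ext1_subsingleton_iff_exact (ModuleCat.of R (R ⧸ Ideal.span ({a} : Set R)))
    (ModuleCat.of R M) (mulResolution a ha)).mp h
  rw [linearYonedaObj_exactAt_one_iff, mulResolution_complex] at hE
  obtain ⟨f, hf⟩ := hE (ModuleCat.ofHom (LinearMap.toSpanSingleton R M m))
    (by rw [mulComplex_d21]; exact Limits.zero_comp)
  rw [mulComplex_d10] at hf
  let f' : R →ₗ[R] M := f.hom
  have hf' : f'.comp (LinearMap.mulLeft R a) = LinearMap.toSpanSingleton R M m := congrArg ModuleCat.Hom.hom hf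
  have key := LinearMap.congr_fun hf' (1 : R)
  simp only [LinearMap.comp_apply, LinearMap.mulLeft_apply, LinearMap.toSpanSingleton_apply,
    one_smul, mul_one] at key
  refine ⟨f' 1, ?_⟩
  rw [← map_smul, smul_eq_mul, mul_one, key]

end LucasAux

end LucasAux

/-- Over an integral domain, an `R`-module is a Lucas module iff it is a
torsion-free injective module. -/
theorem lucas_iff_torsionFree_injective (R : Type u) [CommRing R] [IsDomain R]
    (M : Type u) [AddCommGroup M] [Module R M] :
    IsLucasModule R M ↔ (NoZeroSMulDivisors R M ∧ Module.Injective R M) := by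
  constructor
  · rintro ⟨hQTF, hExt⟩
    have hnz : NoZeroSMulDivisors R M := by
      refine ⟨fun {r x} hrx => ?_⟩
      by_cases hr : r = 0
      · exact Or.inl hr
      · refine Or.inr (hQTF x ⟨Ideal.span {r}, LucasAux.span_singleton_isInQ hr, ?_⟩)
        intro b hb
        obtain ⟨c, rfl⟩ := Ideal.mem_span_singleton.mp hb
        rw [mul_comm, mul_smul, hrx, smul_zero]
    refine ⟨hnz, ?_⟩
    have hdiv : ∀ a : R, a ≠ 0 → ∀ m : M, ∃ n, a • n = m := fun a ha m =>
      LucasAux.divisible_of_ext1 ha (hExt _ (LucasAux.span_singleton_isInQ ha)) m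
    refine Module.Baer.injective ?_
    intro I g
    by_cases hI : I = ⊥
    · subst hI
      refine ⟨0, fun x hx => ?_⟩
      have hx0 : x = 0 := (Submodule.mem_bot R).mp hx
      subst hx0
      have : (⟨0, hx⟩ : (⊥ : Ideal R)) = 0 := rfl
      rw [this, map_zero]
      exact (map_zero g).symm
    · obtain ⟨a, haI, ha0⟩ := Submodule.exists_mem_ne_zero_of_ne_bot hI
      obtain ⟨y, hy⟩ := hdiv a ha0 (g ⟨a, haI⟩)
      refine ⟨LinearMap.toSpanSingleton R M y, fun x hx => ?_⟩
      have h1 : a • (x • y) = a • g ⟨x, hx⟩ := by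
        rw [smul_comm, hy]
        calc x • g ⟨a, haI⟩ = g (x • ⟨a, haI⟩) := (g.map_smul x _).symm
        _ = g (a • ⟨x, hx⟩) := by
              congr 1
              ext
              simp [mul_comm, smul_eq_mul]
        _ = a • g ⟨x, hx⟩ := g.map_smul a _
      have h2 := smul_right_injective M ha0 h1
      simpa [LinearMap.toSpanSingleton_apply] using h2
  · rintro ⟨hnz, hinj⟩
    constructor
    · rintro x ⟨I, ⟨hFG, J, hJI, hJFG, hJd⟩, hann⟩
      have hJ : ∃ a ∈ J, a ≠ 0 := by
        by_contra hcon
        push_neg at hcon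
        have h1 := hJd 1 (fun a haJ => by rw [hcon a haJ, zero_mul])
        exact one_ne_zero h1
      obtain ⟨a, haJ, ha0⟩ := hJ
      have h2 : a • x = 0 := hann a (hJI haJ)
      rcases smul_eq_zero.mp h2 with h | h
      · exact absurd h ha0
      · exact h
    · intro I hI
      haveI : Module.Injective R (ModuleCat.of R M) := hinj
      exact (LucasAux.ext1_subsingleton_iff_exact _ _
        (ProjectiveResolution.of (ModuleCat.of R (R ⧸ I)))).mpr
        ((LucasAux.linearYonedaObj_exactAt_one_iff _ _).mpr
          (LucasAux.exactAt_one_of_injective _ _ _))
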